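/- arXiv:2011.15064 — 5 statements merged into one kernel-verified Lean document; each statement's English description precedes it below -/
import Mathlib

section
/- Let F be a field, and let h₁, h₂ ∈ GL₂(F) be lower-triangular matrices with det h₁ = det h₂. There exists an upper-triangular matrix B ∈ GL₄(F) with ι(h₁,h₂)·u_B = u_B·B if and only if there is λ ∈ Fˣ with h₁ = h₂ = λ·1₂. (Equivalently: the stabiliser, in the lower-triangular Borel subgroup of H(F), of the coset u_B·B_G(F) in GSp₄(F)/B_G(F) is exactly H ∩ Z_G, the group of pairs of equal scalar matrices.) -/
open Matrix

/-- The standard antisymmetric matrix `J` defining `GSp₄`. -/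
def Jmat (R : Type*) [CommRing R] : Matrix (Fin 4) (Fin 4) R :=
  !![0, 0, 0, 1;
     0, 0, 1, 0;
     0, -1, 0, 0;
     -1, 0, 0, 0]

/-- The embedding `ι : GL₂ ×_{GL₁} GL₂ → GSp₄` on matrices. -/
def iota {R : Type*} [CommRing R] (h₁ h₂ : Matrix (Fin 2) (Fin 2) R) :
    Matrix (Fin 4) (Fin 4) R :=
  !![h₁ 0 0, 0, 0, h₁ 0 1;
     0, h₂ 0 0, h₂ 0 1, 0;
     0, h₂ 1 0, h₂ 1 1, 0;
     h₁ 1 0, 0, 0, h₁ 1 1]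

/-- The representative `u_B` of the open orbit of the lower Borel of `H` on `G/B_G`. -/
def uB (R : Type*) [CommRing R] : Matrix (Fin 4) (Fin 4) R :=
  !![1, 0, 0, 0;
     1, 1, 0, 0;
     0, 1, 1, 0;
     0, -1, -1, 1]

theorem stabiliser_of_uB_coset (F : Type*) [Field F]
    (h₁ h₂ : Matrix (Fin 2) (Fin 2) F)
    (hlow₁ : h₁ 0 1 = 0) (hlow₂ : h₂ 0 1 = 0)
    (hu₁ : IsUnit h₁.det) (hu₂ : IsUnit h₂.det)
    (hdet : h₁.det = h₂.det) :
    (∃ B : Matrix (Fin 4) (Fin 4) F, IsUnit B.det ∧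
        (∀ i j : Fin 4, j < i → B i j = 0) ∧
        iota h₁ h₂ * uB F = uB F * B) ↔
      ∃ lam : Fˣ, h₁ = (lam : F) • (1 : Matrix (Fin 2) (Fin 2) F) ∧
        h₂ = (lam : F) • (1 : Matrix (Fin 2) (Fin 2) F) := by
  constructor
  · rintro ⟨B, hBu, htri, heq⟩
    have z10 := htri 1 0 (by decide)
    have z20 := htri 2 0 (by decide)
    have z30 := htri 3 0 (by decide)
    have z21 := htri 2 1 (by decide)
    have z31 := htri 3 1 (by decide)
    have e10 := congrFun (congrFun heq 1) 0
    have e20 := congrFun (congrFun heq 2) 0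
    have e30 := congrFun (congrFun heq 3) 0
    have e01 := congrFun (congrFun heq 0) 1
    have e11 := congrFun (congrFun heq 1) 1
    have e21 := congrFun (congrFun heq 2) 1
    have e31 := congrFun (congrFun heq 3) 1
    have e00 := congrFun (congrFun heq 0) 0
    simp [iota, uB, Matrix.mul_apply, Fin.sum_univ_four, Matrix.vecHead, Matrix.vecTail]
      at e10 e20 e30 e01 e11 e21 e31 e00
    -- derive the values
    have ha' : h₂ 0 0 = h₁ 0 0 := by linear_combination e10 - e00 + z10
    have hc' : h₂ 1 0 = 0 := by linear_combination e20 + z10 + z20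
    have hb01 : B 0 1 = 0 := by linear_combination -e01 - hlow₁
    have hd' : h₂ 1 1 = h₂ 0 0 := by
      linear_combination e21 - e11 - hc' + hlow₂ - hb01 + z21
    have hc : h₁ 1 0 = 0 := by linear_combination e30 - z10 - z20 + z30
    have hd : h₁ 1 1 = h₁ 0 0 := by
      linear_combination -e31 + z21 - z31 - e11 + hlow₂ - hb01 + ha'
    have hne : h₁ 0 0 ≠ 0 := by
      intro h0
      rw [Matrix.det_fin_two, hlow₁, hc, hd, h0] at hu₁
      simp at hu₁
    refine ⟨Units.mk0 (h₁ 0 0) hne, ?_, ?_⟩ <;>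
    · ext i j
      fin_cases i <;> fin_cases j <;>
        simp [Matrix.one_apply, hlow₁, hlow₂, hc, hd, ha', hc', hd']
  · rintro ⟨lam, rfl, rfl⟩
    refine ⟨(lam : F) • (1 : Matrix (Fin 4) (Fin 4) F), ?_, ?_, ?_⟩
    · simp [Matrix.det_smul]
    · intro i j hij
      simp [Matrix.one_apply, (Fin.ne_of_gt hij)]
    · ext i j
      fin_cases i <;> fin_cases j <;>
        simp [iota, uB, Matrix.mul_apply, Fin.sum_univ_four, Matrix.one_apply, Matrix.vecHead, Matrix.vecTail]
end

section
/- Let F be a field and v ∈ F⁴. There exist h₁, h₂ ∈ SL₂(F) with ι(h₁,h₂)·v = (1,1,0,0)ᵀ if and only if (v₁,v₄) ≠ (0,0) and (v₂,v₃) ≠ (0,0). In particular, H(F) acts transitively on the set of lines F·v ⊂ F⁴ spanned by vectors v with (v₁,v₄) ≠ (0,0) and (v₂,v₃) ≠ (0,0): this set is the open H-orbit on the Klingen flag variety GSp₄/P_Kl ≅ ℙ³, and a point of ℙ³ represented by the first column of a matrix u lies in the open orbit precisely when that column is not of the form (0,∗,∗,0) or (∗,0,0,∗). -/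
set_option linter.unnecessarySeqFocus false


open Matrix

lemma sl2_to_e (F : Type*) [Field F] (a b : F) (h : ¬(a = 0 ∧ b = 0)) :
    ∃ M : Matrix (Fin 2) (Fin 2) F, M.det = 1 ∧ M.mulVec ![a, b] = ![1, 0] := by
  by_cases ha : a = 0
  · have hb : b ≠ 0 := fun hb => h ⟨ha, hb⟩
    refine ⟨!![0, b⁻¹; -b, 0], ?_, ?_⟩
    · simp [Matrix.det_fin_two_of]
      field_simp
    · funext i
      fin_cases i <;>
        simp [Matrix.mulVec, dotProduct, Fin.sum_univ_two, ha] <;> field_simp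
  · refine ⟨!![a⁻¹, 0; -b, a], ?_, ?_⟩
    · simp [Matrix.det_fin_two_of]
      field_simp
    · funext i
      fin_cases i <;>
        simp [Matrix.mulVec, dotProduct, Fin.sum_univ_two] <;> first | (field_simp; done) | ring

lemma sl2_trans (F : Type*) [Field F] (a b a' b' : F) (h : ¬(a = 0 ∧ b = 0))
    (h' : ¬(a' = 0 ∧ b' = 0)) :
    ∃ M : Matrix (Fin 2) (Fin 2) F, M.det = 1 ∧ M.mulVec ![a, b] = ![a', b'] := by
  obtain ⟨M, hM, hMv⟩ := sl2_to_e F a b h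
  obtain ⟨N, hN, hNv⟩ := sl2_to_e F a' b' h'
  refine ⟨N.adjugate * M, ?_, ?_⟩
  · rw [Matrix.det_mul, Matrix.det_adjugate, hN, hM]; simp
  · rw [← Matrix.mulVec_mulVec, hMv, ← hNv, Matrix.mulVec_mulVec, Matrix.adjugate_mul, hN]
    simp

/-- The open orbit of `H` on the Klingen flag variety `GSp₄/P_Kl ≅ ℙ³`: a vector `v` can be
moved to `(1,1,0,0)ᵀ` by `ι(SL₂ × SL₂)` iff `(v₁, v₄) ≠ (0,0)` and `(v₂, v₃) ≠ (0,0)`;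
and `H(F)` acts transitively on lines spanned by such vectors. -/
theorem klingen_open_orbit (F : Type*) [Field F] :
    (∀ v : Fin 4 → F,
      (∃ h₁ h₂ : Matrix (Fin 2) (Fin 2) F, h₁.det = 1 ∧ h₂.det = 1 ∧
        (iota h₁ h₂).mulVec v = ![1, 1, 0, 0]) ↔
      (¬(v 0 = 0 ∧ v 3 = 0) ∧ ¬(v 1 = 0 ∧ v 2 = 0))) ∧
    (∀ v v' : Fin 4 → F,
      ¬(v 0 = 0 ∧ v 3 = 0) → ¬(v 1 = 0 ∧ v 2 = 0) →
      ¬(v' 0 = 0 ∧ v' 3 = 0) → ¬(v' 1 = 0 ∧ v' 2 = 0) →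
      ∃ h₁ h₂ : Matrix (Fin 2) (Fin 2) F, h₁.det = h₂.det ∧ IsUnit h₁.det ∧
        ∃ c : Fˣ, (iota h₁ h₂).mulVec v = (c : F) • v') := by
  constructor
  · intro v
    constructor
    · rintro ⟨h₁, h₂, d1, d2, hv⟩
      have e0 := congrFun hv 0
      have e1 := congrFun hv 1
      simp [iota, Matrix.mulVec, dotProduct, Fin.sum_univ_four] at e0 e1
      constructor
      · rintro ⟨hv0, hv3⟩
        rw [hv0, hv3] at e0; simp at e0
      · rintro ⟨hv1, hv2⟩
        rw [hv1, hv2] at e1; simp at e1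
    · rintro ⟨hA, hB⟩
      obtain ⟨M, hM, hMv⟩ := sl2_to_e F (v 0) (v 3) hA
      obtain ⟨N, hN, hNv⟩ := sl2_to_e F (v 1) (v 2) hB
      have m0 := congrFun hMv 0
      have m1 := congrFun hMv 1
      have n0 := congrFun hNv 0
      have n1 := congrFun hNv 1
      simp [Matrix.mulVec, dotProduct, Fin.sum_univ_two] at m0 m1 n0 n1
      refine ⟨M, N, hM, hN, ?_⟩
      funext i
      fin_cases i <;>
        simpa [iota, Matrix.mulVec, dotProduct, Fin.sum_univ_four] using
          (by first | exact m0 | exact m1 | exact n0 | exact n1)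
  · intro v v' hA hB hA' hB'
    obtain ⟨M, hM, hMv⟩ := sl2_trans F (v 0) (v 3) (v' 0) (v' 3) hA hA'
    obtain ⟨N, hN, hNv⟩ := sl2_trans F (v 1) (v 2) (v' 1) (v' 2) hB hB'
    have m0 := congrFun hMv 0
    have m1 := congrFun hMv 1
    have n0 := congrFun hNv 0
    have n1 := congrFun hNv 1
    simp [Matrix.mulVec, dotProduct, Fin.sum_univ_two] at m0 m1 n0 n1
    refine ⟨M, N, hM.trans hN.symm, by rw [hM]; exact isUnit_one, 1, ?_⟩
    funext i
    fin_cases i <;>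
      simpa [iota, Matrix.mulVec, dotProduct, Fin.sum_univ_four] using
        (by first | exact m0 | exact m1 | exact n0 | exact n1)
end

section
/- Assume (c₁,c₂) lies in region (f), i.e. c₁ + c₂ ≤ k₁ − k₂. Then for all j, k ∈ {0,1}: x₀ + yⱼ + zₖ ≤ w and x₁ + yⱼ + zₖ ≤ w, while x₂ + yⱼ + zₖ > w and x₃ + yⱼ + zₖ > w. In other words, the index triples contributing to the Euler factor E_p are exactly those with i ∈ {0,1}, corresponding to the eight Frobenius eigenvalues α𝔞₁𝔞₂, α𝔞₁𝔟₂, α𝔟₁𝔞₂, α𝔟₁𝔟₂, β𝔞₁𝔞₂, β𝔞₁𝔟₂, β𝔟₁𝔞₂, β𝔟₁𝔟₂ appearing in the displayed formula for E_p^{(f)}. -/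
/-- Valuations of the Hecke parameters `(α, β, γ, δ)` of a `p`-ordinary representation of
`GSp₄` of weight `(k₁, k₂)`. -/
def xval (k₁ k₂ : ℤ) : Fin 4 → ℤ := ![0, k₂ - 2, k₁ - 1, k₁ + k₂ - 3]

/-- Valuations of the Hecke parameters `(𝔞, 𝔟)` of a `p`-ordinary eigenform of weight `c`. -/
def yval (c : ℤ) : Fin 2 → ℤ := ![0, c - 1]

/-- In region (f), i.e. `c₁ + c₂ ≤ k₁ - k₂`, the index triples `(i,j,k)` contributing to the
Euler factor `E_p` (i.e. with `xᵢ + yⱼ + zₖ ≤ w`) are exactly those with `i ∈ {0,1}`. -/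
theorem euler_factor_region_f (k₁ k₂ c₁ c₂ w : ℤ)
    (hk₂ : 2 ≤ k₂) (hk : k₂ ≤ k₁) (hc₁ : 1 ≤ c₁) (hc₂ : 1 ≤ c₂)
    (hw : 2 * w = k₁ + k₂ + c₁ + c₂ - 6)
    (hreg : c₁ + c₂ ≤ k₁ - k₂) :
    ∀ j k : Fin 2,
      xval k₁ k₂ 0 + yval c₁ j + yval c₂ k ≤ w ∧
      xval k₁ k₂ 1 + yval c₁ j + yval c₂ k ≤ w ∧
      w < xval k₁ k₂ 2 + yval c₁ j + yval c₂ k ∧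
      w < xval k₁ k₂ 3 + yval c₁ j + yval c₂ k := by
  intro j k
  fin_cases j <;> fin_cases k <;> simp [xval, yval] <;> omega
end

section
/- Assume (c₁,c₂) lies in region (e), i.e. k₁ − k₂ + 4 ≤ c₁ + c₂ ≤ k₁ + k₂ − 2 and |c₁ − c₂| ≤ k₁ − k₂. Then: x₀ + yⱼ + zₖ ≤ w for all (j,k); x₁ + yⱼ + zₖ ≤ w if and only if (j,k) ≠ (1,1); x₂ + yⱼ + zₖ ≤ w if and only if (j,k) = (0,0); and x₃ + yⱼ + zₖ > w for all (j,k). Hence exactly eight index triples contribute to E_p, namely the four with i = 0 (the eigenvalues α𝔞₁𝔞₂, α𝔞₁𝔟₂, α𝔟₁𝔞₂, α𝔟₁𝔟₂), the three with i = 1 and (j,k) ≠ (1,1) (β𝔞₁𝔞₂, β𝔞₁𝔟₂, β𝔟₁𝔞₂), and (i,j,k) = (2,0,0) (γ𝔞₁𝔞₂), as in the region (e) row of the paper's table of Frobenius eigenvalues. -/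
/-- In region (e), i.e. `k₁ - k₂ + 4 ≤ c₁ + c₂ ≤ k₁ + k₂ - 2` and `|c₁ - c₂| ≤ k₁ - k₂`,
the index triples contributing to the Euler factor `E_p` are exactly the eight listed in the
region (e) row of the paper's table. -/
theorem euler_factor_region_e (k₁ k₂ c₁ c₂ w : ℤ)
    (hk₂ : 2 ≤ k₂) (hk : k₂ ≤ k₁) (hc₁ : 1 ≤ c₁) (hc₂ : 1 ≤ c₂)
    (hw : 2 * w = k₁ + k₂ + c₁ + c₂ - 6)
    (hreg₁ : k₁ - k₂ + 4 ≤ c₁ + c₂) (hreg₂ : c₁ + c₂ ≤ k₁ + k₂ - 2)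
    (hreg₃ : |c₁ - c₂| ≤ k₁ - k₂) :
    ∀ j k : Fin 2,
      (xval k₁ k₂ 0 + yval c₁ j + yval c₂ k ≤ w) ∧
      (xval k₁ k₂ 1 + yval c₁ j + yval c₂ k ≤ w ↔ ¬(j = 1 ∧ k = 1)) ∧
      (xval k₁ k₂ 2 + yval c₁ j + yval c₂ k ≤ w ↔ (j = 0 ∧ k = 0)) ∧
      ¬(xval k₁ k₂ 3 + yval c₁ j + yval c₂ k ≤ w) := by
  rw [abs_le] at hreg₃
  obtain ⟨h3a, h3b⟩ := hreg₃
  intro j k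
  fin_cases j <;> fin_cases k <;>
    simp [xval, yval, Fin.ext_iff] <;> omega
end

section
/- Assume (c₁,c₂) lies in region (c), i.e. c₁ + c₂ ≥ k₁ + k₂ and |c₁ − c₂| ≤ k₁ − k₂. Then for i ∈ {0,1}: xᵢ + yⱼ + zₖ ≤ w if and only if (j,k) ≠ (1,1); and for i ∈ {2,3}: xᵢ + yⱼ + zₖ ≤ w if and only if (j,k) = (0,0). Hence exactly eight index triples contribute to E_p, matching the region (c) row of the paper's table of Frobenius eigenvalues. -/
/-- In region (c), i.e. `c₁ + c₂ ≥ k₁ + k₂` and `|c₁ - c₂| ≤ k₁ - k₂`, the index triples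
contributing to the Euler factor `E_p`: for `i ∈ {0,1}` exactly those with `(j,k) ≠ (1,1)`,
and for `i ∈ {2,3}` exactly `(j,k) = (0,0)`. -/
theorem euler_factor_region_c (k₁ k₂ c₁ c₂ w : ℤ)
    (hk₂ : 2 ≤ k₂) (hk : k₂ ≤ k₁) (hc₁ : 1 ≤ c₁) (hc₂ : 1 ≤ c₂)
    (hw : 2 * w = k₁ + k₂ + c₁ + c₂ - 6)
    (hreg₁ : k₁ + k₂ ≤ c₁ + c₂) (hreg₂ : |c₁ - c₂| ≤ k₁ - k₂) :
    ∀ j k : Fin 2,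
      (xval k₁ k₂ 0 + yval c₁ j + yval c₂ k ≤ w ↔ ¬(j = 1 ∧ k = 1)) ∧
      (xval k₁ k₂ 1 + yval c₁ j + yval c₂ k ≤ w ↔ ¬(j = 1 ∧ k = 1)) ∧
      (xval k₁ k₂ 2 + yval c₁ j + yval c₂ k ≤ w ↔ (j = 0 ∧ k = 0)) ∧
      (xval k₁ k₂ 3 + yval c₁ j + yval c₂ k ≤ w ↔ (j = 0 ∧ k = 0)) := by
  rw [abs_le] at hreg₂
  intro j k
  fin_cases j <;> fin_cases k <;>
    simp [xval, yval, Fin.ext_iff] <;> omega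
end
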